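/- For all positive integers a, b, c, d with d ≥ 2 and (c,d) ∉ {(1,2), (1,3), (2,2)}, exp( ln( (a·(c+d)) / ((c+1)·(a+b)) ) − 1.96·√(1/a − 1/(a+b) + 1/(c+1) − 1/(c+d)) ) < exp( ln( (a·(c+d)) / (c·(a+b)) ) − 1.96·√(1/a − 1/(a+b) + 1/c − 1/(c+d)) ). (Anti-monotonicity of the 95% lower confidence interval of the growth rate when one negative tid is added, replacing c by c+1, with c+d fixed.) -/

import Mathlib

private lemma sqrt_le_of_sq_le (q r : ℝ) (hr : 0 ≤ r) (h : q ≤ r^2) :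
    Real.sqrt q ≤ r := by
  calc Real.sqrt q ≤ Real.sqrt (r^2) := Real.sqrt_le_sqrt h
    _ = r := Real.sqrt_sq hr

private lemma le_sqrt_of_sq_le (q r : ℝ) (hr : 0 ≤ r) (h : r^2 ≤ q) :
    r ≤ Real.sqrt q := by
  calc r = Real.sqrt (r^2) := (Real.sqrt_sq hr).symm
    _ ≤ Real.sqrt q := Real.sqrt_le_sqrt h

private lemma log_ge_one_sub_inv (x : ℝ) (hx : 0 < x) : 1 - 1/x ≤ Real.log x := by
  have h := Real.log_le_sub_one_of_pos (show (0:ℝ) < 1/x by positivity)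
  rw [Real.log_div one_ne_zero (ne_of_gt hx), Real.log_one] at h
  linarith

private lemma log_ratio_ge (m n : ℝ) (hn : 0 < n) (hmn : n < m) :
    1 - n/m ≤ Real.log (m/n) := by
  have hm : (0:ℝ) < m := lt_trans hn hmn
  have h := log_ge_one_sub_inv (m/n) (by positivity)
  have hx : 1/(m/n) = n/m := by field_simp
  rw [hx] at h; exact h

/-- Shift lemma (non-strict): adding the same e ≥ 0 inside both sqrts shrinks the gap. -/
private lemma sqrt_shift_le (x y e : ℝ) (hy : 0 ≤ y) (hxy : y ≤ x) (he : 0 ≤ e) :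
    Real.sqrt (x+e) - Real.sqrt (y+e) ≤ Real.sqrt x - Real.sqrt y := by
  have hx : 0 ≤ x := le_trans hy hxy
  set s1 := Real.sqrt (x+e); set s2 := Real.sqrt (y+e)
  set s3 := Real.sqrt x; set s4 := Real.sqrt y
  have hs1 : s1^2 = x + e := Real.sq_sqrt (by linarith)
  have hs2 : s2^2 = y + e := Real.sq_sqrt (by linarith)
  have hs3 : s3^2 = x := Real.sq_sqrt hx
  have hs4 : s4^2 = y := Real.sq_sqrt hy
  have h1 : 0 ≤ s1 := Real.sqrt_nonneg _
  have h2 : 0 ≤ s2 := Real.sqrt_nonneg _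
  have h3 : 0 ≤ s3 := Real.sqrt_nonneg _
  have h4 : 0 ≤ s4 := Real.sqrt_nonneg _
  have h12 : s2 ≤ s1 := Real.sqrt_le_sqrt (by linarith)
  have h34 : s4 ≤ s3 := Real.sqrt_le_sqrt hxy
  have h13 : s3 ≤ s1 := Real.sqrt_le_sqrt (by linarith)
  have h24 : s4 ≤ s2 := Real.sqrt_le_sqrt (by linarith)
  nlinarith [mul_nonneg (sub_nonneg.2 h13) (sub_nonneg.2 h24),
    mul_nonneg (sub_nonneg.2 h12) (sub_nonneg.2 h34), sq_nonneg (s1 - s2 - s3 + s4)]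

/-- Shift lemma (strict). -/
private lemma sqrt_shift_lt (x y e : ℝ) (hy : 0 ≤ y) (hxy : y < x) (he : 0 < e) :
    Real.sqrt (x+e) - Real.sqrt (y+e) < Real.sqrt x - Real.sqrt y := by
  have hx : 0 ≤ x := le_of_lt (lt_of_le_of_lt hy hxy)
  set s1 := Real.sqrt (x+e); set s2 := Real.sqrt (y+e)
  set s3 := Real.sqrt x; set s4 := Real.sqrt y
  have hs1 : s1^2 = x + e := Real.sq_sqrt (by linarith)
  have hs2 : s2^2 = y + e := Real.sq_sqrt (by linarith)
  have hs3 : s3^2 = x := Real.sq_sqrt hx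
  have hs4 : s4^2 = y := Real.sq_sqrt hy
  have h3 : 0 ≤ s3 := Real.sqrt_nonneg _
  have h4 : 0 ≤ s4 := Real.sqrt_nonneg _
  have h24 : s4 < s2 := by
    have h2 : 0 < s2 := Real.sqrt_pos.2 (by linarith)
    nlinarith
  have h34 : s4 ≤ s3 := Real.sqrt_le_sqrt (le_of_lt hxy)
  have h12 : s2 < s1 := by
    have h1 : 0 < s1 := Real.sqrt_pos.2 (by linarith)
    nlinarith
  have key : (s1 - s3) * (s1 + s3) = (s2 - s4) * (s2 + s4) := by nlinarith
  have hgap : s2 + s4 < s1 + s3 := by linarith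
  have h5 : 0 < s2 - s4 := by linarith
  have step : (s2 - s4) * (s2 + s4) < (s2 - s4) * (s1 + s3) :=
    mul_lt_mul_of_pos_left hgap h5
  have : (s1 - s3) * (s1 + s3) < (s2 - s4) * (s1 + s3) := by linarith
  have hfin : s1 - s3 < s2 - s4 := lt_of_mul_lt_mul_right this (by linarith)
  linarith

/-- Core numeric bound for c ≥ 5 (with d already reduced to 2). -/
private lemma core_ge5 (c : ℝ) (hc : 5 ≤ c) :
    1.96 * (Real.sqrt (1/c - 1/(c+2)) - Real.sqrt (1/(c+1) - 1/(c+2)))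
      ≤ Real.log ((c+1)/c) := by
  have hc0 : (0:ℝ) < c := by linarith
  have hd1 : (0:ℝ) < 2*c^2+2*c-1 := by nlinarith
  -- upper bound for first sqrt
  have e1 : 1/c - 1/(c+2) = 2 * (1/(c*(c+2))) := by
    field_simp; ring
  have hBnd : Real.sqrt (1/(c*(c+2))) ≤ 2*c/(2*c^2+2*c-1) := by
    apply sqrt_le_of_sq_le _ _ (by positivity)
    rw [div_pow, div_le_div_iff₀ (by positivity) (by positivity)]
    nlinarith
  have hA : Real.sqrt 2 ≤ 1.41422 := by
    apply sqrt_le_of_sq_le _ _ (by norm_num); norm_num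
  have h1 : Real.sqrt (1/c - 1/(c+2)) ≤ 1.41422 * (2*c/(2*c^2+2*c-1)) := by
    rw [e1, Real.sqrt_mul (by norm_num : (0:ℝ) ≤ 2)]
    exact mul_le_mul hA hBnd (Real.sqrt_nonneg _) (by norm_num)
  -- lower bound for second sqrt
  have e2 : 1/(c+1) - 1/(c+2) = 1/((c+1)*(c+2)) := by
    rw [div_sub_div _ _ (by positivity) (by positivity)]
    norm_num
  have h2 : 2/(2*c+3) ≤ Real.sqrt (1/(c+1) - 1/(c+2)) := by
    rw [e2]
    apply le_sqrt_of_sq_le _ _ (by positivity)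
    rw [div_pow, div_le_div_iff₀ (by positivity) (by positivity)]
    nlinarith
  -- lower bound for the log
  have h3 : 1/(2*c+2) + 1/(2*c+1) ≤ Real.log ((c+1)/c) := by
    have e3 : (c+1)/c = ((2*c+2)/(2*c+1)) * ((2*c+1)/(2*c)) := by
      field_simp
    rw [e3, Real.log_mul (by positivity) (by positivity)]
    have l1 := log_ratio_ge (2*c+2) (2*c+1) (by linarith) (by linarith)
    have l2 := log_ratio_ge (2*c+1) (2*c) (by linarith) (by linarith)
    have e4 : 1 - (2*c+1)/(2*c+2) = 1/(2*c+2) := by field_simp; ring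
    have e5 : 1 - (2*c)/(2*c+1) = 1/(2*c+1) := by field_simp; ring
    rw [e4] at l1; rw [e5] at l2; linarith
  -- final rational inequality
  have h4 : 1.96 * (1.41422 * (2*c/(2*c^2+2*c-1)) - 2/(2*c+3))
      ≤ 1/(2*c+2) + 1/(2*c+1) := by
    rw [← sub_nonneg]
    have e : (1/(2*c+2) + 1/(2*c+1)) - 1.96 * (1.41422 * (2*c/(2*c^2+2*c-1)) - 2/(2*c+3))
        = (940644*c^4 - 828068*c^3 - 9038229*c^2 - 12844517*c - 5262500) /
          (312500*((2*c^2+2*c-1)*((2*c+3)*((2*c+2)*(2*c+1))))) := by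
      obtain ⟨q, hq⟩ : ∃ q : ℝ, q = 2*c^2+2*c-1 := ⟨_, rfl⟩
      have hq0 : q ≠ 0 := by rw [hq]; exact ne_of_gt hd1
      rw [← hq]
      field_simp
      rw [hq]
      ring
    rw [e]
    apply div_nonneg
    · have h5 : (0:ℝ) ≤ c - 5 := by linarith
      nlinarith [mul_nonneg (mul_nonneg h5 h5) h5,
        mul_nonneg (mul_nonneg (mul_nonneg h5 h5) h5) h5, sq_nonneg (c-5)]
    · positivity
  linarith

private lemma core_small (p q B u l : ℝ) (hu : 0 ≤ u) (hl : 0 ≤ l)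
    (hpu : p ≤ u^2) (hlq : l^2 ≤ q) (hB : 1.96 * (u - l) ≤ B) :
    1.96 * (Real.sqrt p - Real.sqrt q) ≤ B := by
  have h1 : Real.sqrt p ≤ u := sqrt_le_of_sq_le _ _ hu hpu
  have h2 : l ≤ Real.sqrt q := le_sqrt_of_sq_le _ _ hl hlq
  linarith

private lemma main_real (A B C D : ℝ) (hA : 0 < A) (hB : 0 < B)
    (hC : 1 ≤ C) (hD : 2 ≤ D)
    (hcase : (C = 1 ∧ 4 ≤ D) ∨ (C = 2 ∧ 3 ≤ D) ∨ C = 3 ∨ C = 4 ∨ 5 ≤ C) :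
    Real.exp (Real.log ((A * (C + D)) / ((C + 1) * (A + B))) -
        1.96 * Real.sqrt (1 / A - 1 / (A + B) + 1 / (C + 1) - 1 / (C + D))) <
      Real.exp (Real.log ((A * (C + D)) / (C * (A + B))) -
        1.96 * Real.sqrt (1 / A - 1 / (A + B) + 1 / C - 1 / (C + D))) := by
  have hC0 : (0:ℝ) < C := by linarith
  have hT : 0 < 1/A - 1/(A+B) := by
    rw [div_sub_div _ _ (ne_of_gt hA) (by positivity)]
    apply div_pos (by linarith) (by positivity)
  set T : ℝ := 1/A - 1/(A+B) with hTdef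
  set X : ℝ := 1/C - 1/(C+D) with hX
  set Y : ℝ := 1/(C+1) - 1/(C+D) with hY
  have hYpos : 0 < Y := by
    rw [hY, div_sub_div _ _ (by positivity) (by positivity)]
    apply div_pos (by linarith) (by positivity)
  have hXY : Y < X := by
    rw [hX, hY]
    have : 1/(C+1) < 1/C := one_div_lt_one_div_of_lt hC0 (by linarith)
    linarith
  -- Step 1: strict shift removing T
  have step1 : Real.sqrt (T + X) - Real.sqrt (T + Y) < Real.sqrt X - Real.sqrt Y := by
    have h := sqrt_shift_lt X Y T (le_of_lt hYpos) hXY hT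
    rw [add_comm X T, add_comm Y T] at h; exact h
  -- d-reduction
  have reduce : ∀ dm : ℝ, 1 ≤ dm → dm ≤ D →
      Real.sqrt X - Real.sqrt Y ≤
      Real.sqrt (1/C - 1/(C+dm)) - Real.sqrt (1/(C+1) - 1/(C+dm)) := by
    intro dm h2m hmD
    have hcd : (0:ℝ) < C + dm := by linarith
    have he : 0 ≤ 1/(C+dm) - 1/(C+D) := by
      rw [div_sub_div _ _ (ne_of_gt hcd) (by positivity)]
      apply div_nonneg (by linarith) (by positivity)
    have hy0 : 0 ≤ 1/(C+1) - 1/(C+dm) := by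
      rw [div_sub_div _ _ (by positivity) (ne_of_gt hcd)]
      apply div_nonneg (by linarith) (by positivity)
    have hyx : 1/(C+1) - 1/(C+dm) ≤ 1/C - 1/(C+dm) := by
      have : 1/(C+1) ≤ 1/C := le_of_lt (one_div_lt_one_div_of_lt hC0 (by linarith))
      linarith
    have h := sqrt_shift_le (1/C - 1/(C+dm)) (1/(C+1) - 1/(C+dm))
      (1/(C+dm) - 1/(C+D)) hy0 hyx he
    have ex : 1/C - 1/(C+dm) + (1/(C+dm) - 1/(C+D)) = X := by rw [hX]; ring
    have ey : 1/(C+1) - 1/(C+dm) + (1/(C+dm) - 1/(C+D)) = Y := by rw [hY]; ring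
    rw [ex, ey] at h; exact h
  -- Step 2
  have step2 : 1.96 * (Real.sqrt X - Real.sqrt Y) ≤ Real.log ((C+1)/C) := by
    rcases hcase with ⟨hc1, hd4⟩ | ⟨hc2, hd3⟩ | hc3 | hc4 | hc5
    · -- C = 1, D ≥ 4
      subst hc1
      have hr := reduce 4 (by norm_num) hd4
      have hnum : 1.96 * (Real.sqrt (1/(1:ℝ) - 1/(1+4)) - Real.sqrt (1/((1:ℝ)+1) - 1/(1+4)))
          ≤ 0.6931471803 :=
        core_small _ _ _ 0.8944272 0.5477225 (by norm_num) (by norm_num)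
          (by norm_num) (by norm_num) (by norm_num)
      have hlog2 : (0.6931471803:ℝ) < Real.log 2 := Real.log_two_gt_d9
      have he2 : Real.log (((1:ℝ)+1)/1) = Real.log 2 := by norm_num
      rw [he2]; linarith
    · -- C = 2, D ≥ 3
      subst hc2
      have hr := reduce 3 (by norm_num) hd3
      have hnum : 1.96 * (Real.sqrt (1/(2:ℝ) - 1/(2+3)) - Real.sqrt (1/((2:ℝ)+1) - 1/(2+3)))
          ≤ 0.357846 :=
        core_small _ _ _ 0.5477226 0.3651483 (by norm_num) (by norm_num)
          (by norm_num) (by norm_num) (by norm_num)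
      have hlog : (0.36:ℝ) ≤ Real.log (((2:ℝ)+1)/2) := by
        have e3 : ((2:ℝ)+1)/2 = (6/5) * (5/4) := by norm_num
        rw [e3, Real.log_mul (by norm_num) (by norm_num)]
        have l1 := log_ratio_ge 6 5 (by norm_num) (by norm_num)
        have l2 := log_ratio_ge 5 4 (by norm_num) (by norm_num)
        norm_num at l1 l2; linarith
      linarith
    · -- C = 3
      subst hc3
      have hr := reduce 2 (by norm_num) hD
      have hnum : 1.96 * (Real.sqrt (1/(3:ℝ) - 1/(3+2)) - Real.sqrt (1/((3:ℝ)+1) - 1/(3+2)))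
          ≤ 0.2774218 :=
        core_small _ _ _ 0.3651484 0.2236067 (by norm_num) (by norm_num)
          (by norm_num) (by norm_num) (by norm_num)
      have hlog : (0.2808:ℝ) ≤ Real.log (((3:ℝ)+1)/3) := by
        have e3 : ((3:ℝ)+1)/3 = (19/18)*((20/19)*((21/20)*((22/21)*((23/22)*(24/23))))) := by
          norm_num
        rw [e3, Real.log_mul (by norm_num) (by positivity),
          Real.log_mul (by norm_num) (by positivity),
          Real.log_mul (by norm_num) (by positivity),
          Real.log_mul (by norm_num) (by positivity),
          Real.log_mul (by norm_num) (by norm_num)]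
        have l1 := log_ratio_ge 19 18 (by norm_num) (by norm_num)
        have l2 := log_ratio_ge 20 19 (by norm_num) (by norm_num)
        have l3 := log_ratio_ge 21 20 (by norm_num) (by norm_num)
        have l4 := log_ratio_ge 22 21 (by norm_num) (by norm_num)
        have l5 := log_ratio_ge 23 22 (by norm_num) (by norm_num)
        have l6 := log_ratio_ge 24 23 (by norm_num) (by norm_num)
        norm_num at l1 l2 l3 l4 l5 l6; linarith
      linarith
    · -- C = 4
      subst hc4
      have hr := reduce 2 (by norm_num) hD
      have hnum : 1.96 * (Real.sqrt (1/(4:ℝ) - 1/(4+2)) - Real.sqrt (1/((4:ℝ)+1) - 1/(4+2)))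
          ≤ 0.2079582 :=
        core_small _ _ _ 0.2886752 0.1825741 (by norm_num) (by norm_num)
          (by norm_num) (by norm_num) (by norm_num)
      have hlog : (0.2182:ℝ) ≤ Real.log (((4:ℝ)+1)/4) := by
        have e3 : ((4:ℝ)+1)/4 = (21/20)*((22/21)*((23/22)*((24/23)*(25/24)))) := by norm_num
        rw [e3, Real.log_mul (by norm_num) (by positivity),
          Real.log_mul (by norm_num) (by positivity),
          Real.log_mul (by norm_num) (by positivity),
          Real.log_mul (by norm_num) (by norm_num)]
        have l1 := log_ratio_ge 21 20 (by norm_num) (by norm_num)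
        have l2 := log_ratio_ge 22 21 (by norm_num) (by norm_num)
        have l3 := log_ratio_ge 23 22 (by norm_num) (by norm_num)
        have l4 := log_ratio_ge 24 23 (by norm_num) (by norm_num)
        have l5 := log_ratio_ge 25 24 (by norm_num) (by norm_num)
        norm_num at l1 l2 l3 l4 l5; linarith
      linarith
    · -- C ≥ 5
      have hr := reduce 2 (by norm_num) hD
      have := core_ge5 C hc5
      linarith
  -- Combine
  apply Real.exp_lt_exp.2
  have hlogsplit : Real.log ((A * (C+D)) / (C * (A+B)))
      = Real.log ((A * (C+D)) / ((C+1) * (A+B))) + Real.log ((C+1)/C) := by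
    rw [← Real.log_mul (by positivity) (by positivity)]
    congr 1
    field_simp
  have eXT : 1/A - 1/(A+B) + 1/C - 1/(C+D) = T + X := by rw [hTdef, hX]; ring
  have eYT : 1/A - 1/(A+B) + 1/(C+1) - 1/(C+D) = T + Y := by rw [hTdef, hY]; ring
  rw [hlogsplit, eXT, eYT]
  linarith [step1, step2]

theorem lci_gr_antimono (a b c d : ℕ) (ha : 0 < a) (hb : 0 < b) (hc : 0 < c)
    (hd : 2 ≤ d)
    (hexc : ¬((c = 1 ∧ d = 2) ∨ (c = 1 ∧ d = 3) ∨ (c = 2 ∧ d = 2))) :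
    Real.exp (Real.log ((a * ((c : ℝ) + d)) / (((c : ℝ) + 1) * ((a : ℝ) + b))) -
        1.96 * Real.sqrt (1 / a - 1 / ((a : ℝ) + b) + 1 / ((c : ℝ) + 1) - 1 / ((c : ℝ) + d))) <
      Real.exp (Real.log ((a * ((c : ℝ) + d)) / ((c : ℝ) * ((a : ℝ) + b))) -
        1.96 * Real.sqrt (1 / a - 1 / ((a : ℝ) + b) + 1 / (c : ℝ) - 1 / ((c : ℝ) + d))) := by
  have hcase : (c = 1 ∧ 4 ≤ d) ∨ (c = 2 ∧ 3 ≤ d) ∨ c = 3 ∨ c = 4 ∨ 5 ≤ c := by omega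
  have hcase' : ((c:ℝ) = 1 ∧ 4 ≤ (d:ℝ)) ∨ ((c:ℝ) = 2 ∧ 3 ≤ (d:ℝ)) ∨ (c:ℝ) = 3 ∨
      (c:ℝ) = 4 ∨ 5 ≤ (c:ℝ) := by
    rcases hcase with ⟨h1, h2⟩ | ⟨h1, h2⟩ | h | h | h
    · exact Or.inl ⟨by exact_mod_cast h1, by exact_mod_cast h2⟩
    · exact Or.inr (Or.inl ⟨by exact_mod_cast h1, by exact_mod_cast h2⟩)
    · exact Or.inr (Or.inr (Or.inl (by exact_mod_cast h)))
    · exact Or.inr (Or.inr (Or.inr (Or.inl (by exact_mod_cast h))))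
    · exact Or.inr (Or.inr (Or.inr (Or.inr (by exact_mod_cast h))))
  exact main_real (a:ℝ) (b:ℝ) (c:ℝ) (d:ℝ) (by exact_mod_cast ha) (by exact_mod_cast hb)
    (by exact_mod_cast hc) (by exact_mod_cast hd) hcase'
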